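/- arXiv:1503.01811 — 4 statements merged into one kernel-verified Lean document; each statement's English description precedes it below -/
import Mathlib

section
/- Suppose the feasible set {z ∈ [−1,1]^n : (1/n) F z ≥ b componentwise} is nonempty. Then for any g ∈ [−1,1]^n, min over z in this feasible set of (1/n)⟨z, g⟩ equals sup over σ ≥ 0 in ℝ^p of (⟨b, σ⟩ − (1/n)‖F^⊤ σ − g‖_1). -/
open Finset

-- sum swap
lemma lpaux_sumswap (n p : ℕ) (F : Fin p → Fin n → ℝ) (z : Fin n → ℝ) (σ : Fin p → ℝ) (c : ℝ) :
    ∑ i, (c * ∑ j, F i j * z j) * σ i = c * ∑ j, z j * (∑ i, F i j * σ i) := by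
  have h1 : ∀ i, (c * ∑ j, F i j * z j) * σ i = ∑ j, c * (z j * (F i j * σ i)) := by
    intro i
    rw [Finset.mul_sum, Finset.sum_mul]
    exact Finset.sum_congr rfl fun j _ => by ring
  have h2 : ∀ j : Fin n, c * (z j * (∑ i, F i j * σ i)) = ∑ i, c * (z j * (F i j * σ i)) := by
    intro j
    rw [Finset.mul_sum, Finset.mul_sum]
  simp only [h1]
  rw [Finset.sum_comm, Finset.mul_sum]
  exact Finset.sum_congr rfl fun j _ => (h2 j).symm

-- ray lemma
lemma lpaux_ray (A v w : ℝ) (h : ∀ s : ℝ, 0 ≤ s → v < A + s * w) : 0 ≤ w := by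
  by_contra hw
  push_neg at hw
  have hA : v < A := by simpa using h 0 le_rfl
  have hs : 0 ≤ (v - A) / w + 1 := by
    have : 0 < (v - A) / w := div_pos_of_neg_of_neg (by linarith) hw
    linarith
  have := h ((v - A) / w + 1) hs
  have hww : w ≠ 0 := ne_of_lt hw
  have : A + ((v - A) / w + 1) * w = v + w := by field_simp; ring
  linarith [h ((v - A) / w + 1) hs, this]

noncomputable def lpaux_L (n p : ℕ) (F : Fin p → Fin n → ℝ) (g : Fin n → ℝ) (c : ℝ) :
    (Fin n → ℝ) →ₗ[ℝ] (Fin p → ℝ) × ℝ where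
  toFun z := (fun i => c * ∑ j, F i j * z j, c * ∑ j, z j * g j)
  map_add' x y := by
    have e1 : ∀ (w : Fin n → ℝ) (i : Fin p), ∑ j, F i j * (x j + y j)
        = (∑ j, F i j * x j) + ∑ j, F i j * y j := by
      intro w i
      rw [← Finset.sum_add_distrib]
      exact Finset.sum_congr rfl fun j _ => by ring
    have e2 : ∑ j, (x j + y j) * g j = (∑ j, x j * g j) + ∑ j, y j * g j := by
      rw [← Finset.sum_add_distrib]
      exact Finset.sum_congr rfl fun j _ => by ring
    refine Prod.ext ?_ ?_
    · funext i
      simp only [Pi.add_apply, Prod.fst_add, e1 x i]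
      ring
    · simp only [Pi.add_apply, Prod.snd_add, e2]
      ring
  map_smul' r x := by
    have e1 : ∀ i : Fin p, ∑ j, F i j * (r * x j) = r * ∑ j, F i j * x j := by
      intro i
      rw [Finset.mul_sum]
      exact Finset.sum_congr rfl fun j _ => by ring
    have e2 : ∑ j, (r * x j) * g j = r * ∑ j, x j * g j := by
      rw [Finset.mul_sum]
      exact Finset.sum_congr rfl fun j _ => by ring
    refine Prod.ext ?_ ?_
    · funext i
      simp only [Pi.smul_apply, smul_eq_mul, RingHom.id_apply, Prod.smul_fst, e1]
      ring
    · simp only [Pi.smul_apply, smul_eq_mul, RingHom.id_apply, Prod.smul_snd, e2]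
      ring

lemma lpaux_L_cont (n p : ℕ) (F : Fin p → Fin n → ℝ) (g : Fin n → ℝ) (c : ℝ) :
    Continuous (lpaux_L n p F g c) :=
  (lpaux_L n p F g c).continuous_of_finiteDimensional

lemma lpaux_decomp (p : ℕ) (f : ((Fin p → ℝ) × ℝ) →L[ℝ] ℝ) (y : Fin p → ℝ) (t : ℝ) :
    f (y, t) = (∑ i, y i * f (Pi.single i 1, 0)) + t * f (0, 1) := by
  have hsingle : ∀ i : Fin p, y i • (Pi.single i (1:ℝ) : Fin p → ℝ) = Pi.single i (y i) :=
    fun i => by rw [← Pi.single_smul, smul_eq_mul, mul_one]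
  have hyd : (y, t) = (∑ i, y i • ((Pi.single i (1:ℝ) : Fin p → ℝ), (0:ℝ)))
      + t • ((0 : Fin p → ℝ), (1:ℝ)) := by
    refine Prod.ext ?_ ?_
    · simp only [Prod.fst_add, Prod.fst_sum, Prod.smul_fst, Prod.smul_snd, smul_zero,
        hsingle, Finset.univ_sum_single, add_zero]
    · simp [Prod.snd_sum]
  conv_lhs => rw [hyd]
  rw [map_add, map_smul, map_sum, smul_eq_mul]
  congr 1
  exact Finset.sum_congr rfl fun i _ => by rw [map_smul, smul_eq_mul]

theorem lp_strong_duality_inner_game (n p : ℕ) (hn : 0 < n)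
    (F : Fin p → Fin n → ℝ) (hF : ∀ i j, |F i j| ≤ 1)
    (b : Fin p → ℝ) (g : Fin n → ℝ) (hg : ∀ j, -1 ≤ g j ∧ g j ≤ 1)
    (hfeas : ∃ z : Fin n → ℝ, (∀ j, -1 ≤ z j ∧ z j ≤ 1) ∧
      ∀ i, b i ≤ (1 / (n : ℝ)) * ∑ j, F i j * z j) :
    sInf {v : ℝ | ∃ z : Fin n → ℝ, (∀ j, -1 ≤ z j ∧ z j ≤ 1) ∧
        (∀ i, b i ≤ (1 / (n : ℝ)) * ∑ j, F i j * z j) ∧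
        v = (1 / (n : ℝ)) * ∑ j, z j * g j}
    = sSup {v : ℝ | ∃ σ : Fin p → ℝ, (∀ i, 0 ≤ σ i) ∧
        v = (∑ i, b i * σ i) - (1 / (n : ℝ)) * ∑ j, |(∑ i, F i j * σ i) - g j|} := by
  set c : ℝ := 1 / (n : ℝ) with hcdef
  have hc : 0 < c := by
    rw [hcdef]
    exact one_div_pos.mpr (by exact_mod_cast hn)
  set P := {v : ℝ | ∃ z : Fin n → ℝ, (∀ j, -1 ≤ z j ∧ z j ≤ 1) ∧
      (∀ i, b i ≤ c * ∑ j, F i j * z j) ∧ v = c * ∑ j, z j * g j} with hPdef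
  set Q := {v : ℝ | ∃ σ : Fin p → ℝ, (∀ i, 0 ≤ σ i) ∧
      v = (∑ i, b i * σ i) - c * ∑ j, |(∑ i, F i j * σ i) - g j|} with hQdef
  -- the box
  set B : Set (Fin n → ℝ) := Set.Icc (fun _ => (-1:ℝ)) (fun _ => (1:ℝ)) with hBdef
  have hBmem : ∀ z : Fin n → ℝ, (∀ j, -1 ≤ z j ∧ z j ≤ 1) → z ∈ B := by
    intro z hz
    rw [hBdef, Set.mem_Icc]
    exact ⟨fun j => (hz j).1, fun j => (hz j).2⟩
  have hBmem' : ∀ z : Fin n → ℝ, z ∈ B → (∀ j, -1 ≤ z j ∧ z j ≤ 1) := by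
    intro z hz j
    rw [hBdef, Set.mem_Icc] at hz
    exact ⟨hz.1 j, hz.2 j⟩
  -- feasible set K
  set K : Set (Fin n → ℝ) := {z | (∀ j, -1 ≤ z j ∧ z j ≤ 1) ∧ ∀ i, b i ≤ c * ∑ j, F i j * z j}
    with hKdef
  set φ : (Fin n → ℝ) → ℝ := fun z => c * ∑ j, z j * g j with hφdef
  have hPK : P = φ '' K := by
    ext v
    constructor
    · rintro ⟨z, h1, h2, rfl⟩
      exact ⟨z, ⟨h1, h2⟩, rfl⟩
    · rintro ⟨z, ⟨h1, h2⟩, rfl⟩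
      exact ⟨z, h1, h2, rfl⟩
  have hφcont : Continuous φ :=
    continuous_const.mul (continuous_finset_sum _ fun j _ =>
      (continuous_apply j).mul continuous_const)
  have hKclosed : IsClosed K := by
    have : K = (⋂ j, {z : Fin n → ℝ | -1 ≤ z j ∧ z j ≤ 1}) ∩
        ⋂ i, {z : Fin n → ℝ | b i ≤ c * ∑ j, F i j * z j} := by
      ext z
      simp only [hKdef, Set.mem_setOf_eq, Set.mem_inter_iff, Set.mem_iInter]
    rw [this]
    refine IsClosed.inter (isClosed_iInter fun j => ?_) (isClosed_iInter fun i => ?_)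
    · exact (isClosed_le continuous_const (continuous_apply j)).inter
        (isClosed_le (continuous_apply j) continuous_const)
    · exact isClosed_le continuous_const
        (continuous_const.mul (continuous_finset_sum _ fun j _ =>
          continuous_const.mul (continuous_apply j)))
  have hKcomp : IsCompact K :=
    IsCompact.of_isClosed_subset isCompact_Icc hKclosed (fun z hz => hBmem z hz.1)
  have hPcomp : IsCompact P := by
    rw [hPK]
    exact hKcomp.image hφcont
  have hPne : P.Nonempty := by
    obtain ⟨z, hz1, hz2⟩ := hfeas
    exact ⟨_, z, hz1, hz2, rfl⟩
  have hQne : Q.Nonempty := ⟨_, fun _ => 0, fun i => le_rfl, rfl⟩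
  -- weak duality
  have hweak : ∀ q ∈ Q, ∀ w ∈ P, q ≤ w := by
    rintro q ⟨σ, hσ, rfl⟩ w ⟨z, hz, hzc, rfl⟩
    have hs := lpaux_sumswap n p F z σ c
    have h1 : ∑ i, b i * σ i ≤ ∑ i, (c * ∑ j, F i j * z j) * σ i :=
      Finset.sum_le_sum fun i _ => mul_le_mul_of_nonneg_right (hzc i) (hσ i)
    have h2 : ∑ j, z j * (∑ i, F i j * σ i)
        ≤ ∑ j, (z j * g j + |(∑ i, F i j * σ i) - g j|) := by
      refine Finset.sum_le_sum fun j _ => ?_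
      have a1 : 0 ≤ (1 - z j) * (|(∑ i, F i j * σ i) - g j| + ((∑ i, F i j * σ i) - g j)) :=
        mul_nonneg (by linarith [(hz j).2]) (by linarith [neg_abs_le ((∑ i, F i j * σ i) - g j)])
      have a2 : 0 ≤ (1 + z j) * (|(∑ i, F i j * σ i) - g j| - ((∑ i, F i j * σ i) - g j)) :=
        mul_nonneg (by linarith [(hz j).1]) (by linarith [le_abs_self ((∑ i, F i j * σ i) - g j)])
      nlinarith [a1, a2]
    have h3 := mul_le_mul_of_nonneg_left h2 hc.le
    have h4 : ∑ j, (z j * g j + |(∑ i, F i j * σ i) - g j|)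
        = (∑ j, z j * g j) + ∑ j, |(∑ i, F i j * σ i) - g j| := Finset.sum_add_distrib
    rw [h4, mul_add] at h3
    have h5 : ∑ i, b i * σ i ≤ c * ∑ j, z j * (∑ i, F i j * σ i) := le_of_le_of_eq h1 hs
    linarith [h3, h5]
  have hQbdd : BddAbove Q := by
    obtain ⟨w, hw⟩ := hPne
    exact ⟨w, fun q hq => hweak q hq w hw⟩
  have hPbdd : BddBelow P := by
    obtain ⟨q, hq⟩ := hQne
    exact ⟨q, fun w hw => hweak q hq w hw⟩
  have le1 : sSup Q ≤ sInf P :=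
    csSup_le hQne fun q hq => le_csInf hPne fun w hw => hweak q hq w hw
  have le2 : sInf P ≤ sSup Q := by
    refine le_of_forall_pos_le_add ?_
    intro ε hε
    have hvP : sInf P ∈ P := hPcomp.sInf_mem hPne
    set v₀ := sInf P with hv₀
    clear_value v₀
    set L := lpaux_L n p F g c with hL
    have hLz : ∀ z : Fin n → ℝ,
        L z = ((fun i => c * ∑ j, F i j * z j), c * ∑ j, z j * g j) := fun z => rfl
    set C := L '' B with hC
    set D := {yt : (Fin p → ℝ) × ℝ | (∀ i, b i ≤ yt.1 i) ∧ yt.2 ≤ v₀ - ε} with hD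
    have hCconv : Convex ℝ C := (convex_Icc _ _).linear_image L
    have hCcomp : IsCompact C := isCompact_Icc.image (lpaux_L_cont n p F g c)
    have hDconv : Convex ℝ D := by
      rintro x ⟨hx1, hx2⟩ y ⟨hy1, hy2⟩ a b' ha hb hab
      refine ⟨fun i => ?_, ?_⟩
      · have h1 : a * b i ≤ a * x.1 i := mul_le_mul_of_nonneg_left (hx1 i) ha
        have h2 : b' * b i ≤ b' * y.1 i := mul_le_mul_of_nonneg_left (hy1 i) hb
        have h3 : (a • x + b' • y).1 i = a * x.1 i + b' * y.1 i := rfl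
        have hb1 : a * b i + b' * b i = b i := by rw [← add_mul, hab, one_mul]
        rw [h3]
        linarith
      · have h3 : (a • x + b' • y).2 = a * x.2 + b' * y.2 := rfl
        have h1 : a * x.2 ≤ a * (v₀ - ε) := mul_le_mul_of_nonneg_left hx2 ha
        have h2 : b' * y.2 ≤ b' * (v₀ - ε) := mul_le_mul_of_nonneg_left hy2 hb
        have hb1 : a * (v₀ - ε) + b' * (v₀ - ε) = v₀ - ε := by rw [← add_mul, hab, one_mul]
        rw [h3]
        linarith
    have hDclosed : IsClosed D := by
      have : D = (⋂ i, {yt : (Fin p → ℝ) × ℝ | b i ≤ yt.1 i}) ∩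
          {yt : (Fin p → ℝ) × ℝ | yt.2 ≤ v₀ - ε} := by
        ext yt
        simp only [hD, Set.mem_setOf_eq, Set.mem_inter_iff, Set.mem_iInter]
      rw [this]
      have hcont : ∀ i : Fin p, Continuous fun yt : (Fin p → ℝ) × ℝ => yt.1 i :=
        fun i => (continuous_apply i).comp continuous_fst
      exact (isClosed_iInter fun i => isClosed_le continuous_const (hcont i)).inter
        (isClosed_le continuous_snd continuous_const)
    have hdisj : Disjoint C D := by
      rw [Set.disjoint_left]
      rintro x ⟨z, hzB, rfl⟩ ⟨hd1, hd2⟩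
      rw [hLz] at hd1 hd2
      simp only at hd1 hd2
      have hzP : φ z ∈ P := ⟨z, hBmem' z hzB, fun i => hd1 i, rfl⟩
      have := csInf_le hPbdd hzP
      rw [← hv₀] at this
      have : v₀ ≤ c * ∑ j, z j * g j := this
      linarith
    obtain ⟨f, u, v, hfc, huv, hfd⟩ :=
      geometric_hahn_banach_compact_closed hCconv hCcomp hDconv hDclosed hdisj
    set σ' : Fin p → ℝ := fun i => f (Pi.single i 1, 0) with hσ'
    set τ : ℝ := f (0, 1) with hτdef
    have hfdec : ∀ (y : Fin p → ℝ) (t : ℝ), f (y, t) = (∑ i, y i * σ' i) + t * τ :=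
      lpaux_decomp p f
    clear_value σ' τ
    have hσ'nn : ∀ i, 0 ≤ σ' i := by
      intro i
      refine lpaux_ray ((∑ k, b k * σ' k) + (v₀ - ε) * τ) v (σ' i) ?_
      intro s hs
      have hsingle_nn : ∀ k, (0:ℝ) ≤ s * (Pi.single i 1 : Fin p → ℝ) k := by
        intro k
        rcases eq_or_ne k i with rfl | hk
        · simpa using hs
        · have h0 : (Pi.single i 1 : Fin p → ℝ) k = 0 := Pi.single_eq_of_ne hk 1
          rw [h0, mul_zero]
      have hmem : ((fun k => b k + s * (Pi.single i 1 : Fin p → ℝ) k), v₀ - ε) ∈ D := by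
        refine ⟨fun k => ?_, le_rfl⟩
        simp only
        linarith [hsingle_nn k]
      have hm := hfd _ hmem
      rw [hfdec] at hm
      have hsum : ∑ k, (b k + s * (Pi.single i 1 : Fin p → ℝ) k) * σ' k
          = (∑ k, b k * σ' k) + s * σ' i := by
        have e : ∀ k, (b k + s * (Pi.single i 1 : Fin p → ℝ) k) * σ' k
            = b k * σ' k + s * ((Pi.single i 1 : Fin p → ℝ) k * σ' k) := fun k => by ring
        rw [Finset.sum_congr rfl fun k _ => e k, Finset.sum_add_distrib, ← Finset.mul_sum]
        congr 1
        congr 1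
        rw [Finset.sum_eq_single i]
        · simp
        · intro k _ hk
          have h0 : (Pi.single i 1 : Fin p → ℝ) k = 0 := Pi.single_eq_of_ne hk 1
          rw [h0]
          ring
        · intro h
          exact absurd (Finset.mem_univ i) h
      rw [hsum] at hm
      linarith
    have hτnp : τ ≤ 0 := by
      have h0 : 0 ≤ -τ := by
        refine lpaux_ray ((∑ k, b k * σ' k) + (v₀ - ε) * τ) v (-τ) ?_
        intro s hs
        have hm := hfd (b, v₀ - ε - s)
          ⟨fun i => le_rfl, show v₀ - ε - s ≤ v₀ - ε by linarith⟩
        rw [hfdec] at hm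
        have e : (v₀ - ε - s) * τ = (v₀ - ε) * τ + s * (-τ) := by ring
        rw [e] at hm
        linarith
      linarith
    obtain ⟨z₀, hz₀b, hz₀c⟩ := hfeas
    have hC₀ := hfc (L z₀) ⟨z₀, hBmem z₀ hz₀b, rfl⟩
    have hD₀ := hfd (b, v₀ - ε) ⟨fun i => le_rfl, le_rfl⟩
    rw [hLz z₀, hfdec] at hC₀
    rw [hfdec] at hD₀
    have hτneg : τ < 0 := by
      rcases hτnp.lt_or_eq with h | h
      · exact h
      · exfalso
        rw [h] at hC₀ hD₀
        simp only [mul_zero, add_zero] at hC₀ hD₀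
        have hle : ∑ i, b i * σ' i ≤ ∑ i, (c * ∑ j, F i j * z₀ j) * σ' i :=
          Finset.sum_le_sum fun i _ => mul_le_mul_of_nonneg_right (hz₀c i) (hσ'nn i)
        linarith
    set t0 : ℝ := -τ with ht0
    have ht0pos : 0 < t0 := by rw [ht0]; linarith
    clear_value t0
    set σ : Fin p → ℝ := fun i => σ' i / t0 with hσdef
    have hσnn : ∀ i, 0 ≤ σ i := fun i => div_nonneg (hσ'nn i) ht0pos.le
    have hσ'eq : ∀ i, σ' i = t0 * σ i := by
      intro i
      rw [hσdef]
      field_simp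
    clear_value σ
    set z₁ : Fin n → ℝ := fun j => if 0 ≤ (∑ i, F i j * σ i) - g j then 1 else -1 with hz₁
    have hz₁b : ∀ j, -1 ≤ z₁ j ∧ z₁ j ≤ 1 := by
      intro j
      simp only [hz₁]
      split <;> norm_num
    have hz₁val : ∀ j, z₁ j * ((∑ i, F i j * σ i) - g j) = |(∑ i, F i j * σ i) - g j| := by
      intro j
      simp only [hz₁]
      by_cases h : 0 ≤ (∑ i, F i j * σ i) - g j
      · rw [if_pos h, abs_of_nonneg h, one_mul]
      · rw [if_neg h, abs_of_neg (not_le.mp h)]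
        ring
    clear_value z₁
    have hC₁ := hfc (L z₁) ⟨z₁, hBmem z₁ hz₁b, rfl⟩
    rw [hLz z₁, hfdec] at hC₁
    have e1 : ∑ i, (c * ∑ j, F i j * z₁ j) * σ' i
        = t0 * ∑ i, (c * ∑ j, F i j * z₁ j) * σ i := by
      rw [Finset.mul_sum]
      exact Finset.sum_congr rfl fun i _ => by rw [hσ'eq i]; ring
    have e2 : ∑ i, b i * σ' i = t0 * ∑ i, b i * σ i := by
      rw [Finset.mul_sum]
      exact Finset.sum_congr rfl fun i _ => by rw [hσ'eq i]; ring
    have hτt0 : τ = -t0 := by rw [ht0]; ring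
    rw [e1, hτt0] at hC₁
    rw [e2, hτt0] at hD₀
    have hkey : t0 * ((∑ i, (c * ∑ j, F i j * z₁ j) * σ i) - c * ∑ j, z₁ j * g j)
        < t0 * ((∑ i, b i * σ i) - (v₀ - ε)) := by
      have ea : t0 * ((∑ i, (c * ∑ j, F i j * z₁ j) * σ i) - c * ∑ j, z₁ j * g j)
          = (∑ i, (c * ∑ j, F i j * z₁ j) * σ i) * t0 + (c * ∑ j, z₁ j * g j) * (-t0) := by
        ring
      have eb : t0 * ((∑ i, b i * σ i) - (v₀ - ε))
          = (∑ i, b i * σ i) * t0 + (v₀ - ε) * (-t0) := by ring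
      rw [ea, eb]
      have eC : (∑ i, (c * ∑ j, F i j * z₁ j) * σ i) * t0
          = t0 * ∑ i, (c * ∑ j, F i j * z₁ j) * σ i := by ring
      have eD : (∑ i, b i * σ i) * t0 = t0 * ∑ i, b i * σ i := by ring
      rw [eC, eD]
      linarith [hC₁, hD₀, huv]
    have hdiv := (mul_lt_mul_iff_right₀ ht0pos).mp hkey
    have hswap := lpaux_sumswap n p F z₁ σ c
    have habs : (∑ j, z₁ j * (∑ i, F i j * σ i)) - ∑ j, z₁ j * g j
        = ∑ j, |(∑ i, F i j * σ i) - g j| := by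
      rw [← Finset.sum_sub_distrib]
      exact Finset.sum_congr rfl fun j _ => by rw [← hz₁val j]; ring
    have hlhs : (∑ i, (c * ∑ j, F i j * z₁ j) * σ i) - c * ∑ j, z₁ j * g j
        = c * ∑ j, |(∑ i, F i j * σ i) - g j| := by
      rw [hswap, ← habs, mul_sub]
    rw [hlhs] at hdiv
    have hqQ : ((∑ i, b i * σ i) - c * ∑ j, |(∑ i, F i j * σ i) - g j|) ∈ Q :=
      ⟨σ, hσnn, rfl⟩
    have hle := le_csSup hQbdd hqQ
    linarith
  exact le_antisymm le2 le1
end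

section
/- For any σ ≥ 0 in ℝ^p, define the clipped prediction g(σ) ∈ [−1,1]^n by g(σ)_j = ⟨x_j, σ⟩ if |⟨x_j, σ⟩| < 1 and g(σ)_j = sgn(⟨x_j, σ⟩) otherwise. Then for every z ∈ [−1,1]^n with (1/n) F z ≥ b, it holds that (1/n)⟨z, g(σ)⟩ ≥ −γ(σ), where γ(σ) = (1/n) Σ_j max(0, |⟨x_j, σ⟩| − 1) − ⟨b, σ⟩. -/
lemma pointwise_clip_bound (a z : ℝ) (hz1 : -1 ≤ z) (hz2 : z ≤ 1)
    (g : ℝ) (hg : g = if |a| < 1 then a else Real.sign a) :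
    z * a - max 0 (|a| - 1) ≤ z * g := by
  by_cases h : |a| < 1
  · rw [hg, if_pos h, max_eq_left (by linarith)]; simp
  · push_neg at h
    rw [hg, if_neg (not_lt.mpr h)]
    have hmax : max 0 (|a| - 1) = |a| - 1 := max_eq_right (by linarith)
    rw [hmax]
    have hza : z * (a - Real.sign a) ≤ |a| - 1 := by
      calc z * (a - Real.sign a) ≤ |z * (a - Real.sign a)| := le_abs_self _
        _ = |z| * |a - Real.sign a| := abs_mul _ _
        _ ≤ 1 * |a - Real.sign a| := by
            apply mul_le_mul_of_nonneg_right _ (abs_nonneg _)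
            exact abs_le.mpr ⟨hz1, hz2⟩
        _ = |a - Real.sign a| := one_mul _
        _ = |a| - 1 := by
            rcases lt_trichotomy a 0 with h0 | h0 | h0
            · rw [abs_of_neg h0] at h ⊢
              rw [Real.sign_of_neg h0, abs_of_nonpos (by linarith)]
              ring
            · simp [h0] at h; linarith
            · rw [Real.sign_of_pos h0, abs_of_pos h0] at *
              rw [abs_of_nonneg (by linarith)]
    linarith

theorem clipped_prediction_correlation_bound (n p : ℕ) (hn : 0 < n)
    (F : Fin p → Fin n → ℝ) (hF : ∀ i j, |F i j| ≤ 1)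
    (b : Fin p → ℝ) (σ : Fin p → ℝ) (hσ : ∀ i, 0 ≤ σ i)
    (g : Fin n → ℝ)
    (hgdef : ∀ j, g j = if |∑ i, F i j * σ i| < 1 then ∑ i, F i j * σ i
        else Real.sign (∑ i, F i j * σ i))
    (z : Fin n → ℝ) (hz : ∀ j, -1 ≤ z j ∧ z j ≤ 1)
    (hzb : ∀ i, b i ≤ (1 / (n : ℝ)) * ∑ j, F i j * z j) :
    (1 / (n : ℝ)) * ∑ j, z j * g j ≥
      -((1 / (n : ℝ)) * ∑ j, max 0 (|∑ i, F i j * σ i| - 1) - ∑ i, b i * σ i) := by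
  have hn' : (0:ℝ) < (n:ℝ) := by exact_mod_cast hn
  have step1 : ∑ j, (z j * (∑ i, F i j * σ i) - max 0 (|∑ i, F i j * σ i| - 1))
      ≤ ∑ j, z j * g j :=
    Finset.sum_le_sum fun j _ =>
      pointwise_clip_bound _ _ (hz j).1 (hz j).2 _ (hgdef j)
  have step2 : (n:ℝ) * ∑ i, b i * σ i ≤ ∑ j, z j * (∑ i, F i j * σ i) := by
    have : ∑ j, z j * (∑ i, F i j * σ i) = ∑ i, (∑ j, F i j * z j) * σ i := by
      calc ∑ j, z j * (∑ i, F i j * σ i) = ∑ j, ∑ i, F i j * z j * σ i := by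
            refine Finset.sum_congr rfl fun j _ => ?_
            rw [Finset.mul_sum]
            exact Finset.sum_congr rfl fun i _ => by ring
        _ = ∑ i, ∑ j, F i j * z j * σ i := Finset.sum_comm
        _ = ∑ i, (∑ j, F i j * z j) * σ i := by
            refine Finset.sum_congr rfl fun i _ => ?_
            rw [Finset.sum_mul]
    rw [this, Finset.mul_sum]
    apply Finset.sum_le_sum
    intro i _
    have := hzb i
    have h2 : (n:ℝ) * b i ≤ ∑ j, F i j * z j := by
      rw [div_mul_eq_mul_div, one_mul] at this
      exact (le_div_iff₀' hn').mp this
    calc (n:ℝ) * (b i * σ i) = ((n:ℝ) * b i) * σ i := by ring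
      _ ≤ (∑ j, F i j * z j) * σ i := mul_le_mul_of_nonneg_right h2 (hσ i)
  rw [ge_iff_le, neg_le, ← sub_nonneg]
  have expand : ∑ j, (z j * (∑ i, F i j * σ i) - max 0 (|∑ i, F i j * σ i| - 1))
      = ∑ j, z j * (∑ i, F i j * σ i) - ∑ j, max 0 (|∑ i, F i j * σ i| - 1) :=
    Finset.sum_sub_distrib _ _
  have key : (n:ℝ) * ∑ i, b i * σ i - ∑ j, max 0 (|∑ i, F i j * σ i| - 1)
      ≤ ∑ j, z j * g j := by
    rw [expand] at step1; linarith
  have : -(( 1 / (n:ℝ)) * ∑ j, max 0 (|∑ i, F i j * σ i| - 1) - ∑ i, b i * σ i)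
      ≤ (1 / (n:ℝ)) * ∑ j, z j * g j := by
    rw [neg_sub]
    have := mul_le_mul_of_nonneg_left key (le_of_lt (one_div_pos.mpr hn'))
    calc ∑ i, b i * σ i - (1/(n:ℝ)) * ∑ j, max 0 (|∑ i, F i j * σ i| - 1)
        = (1/(n:ℝ)) * ((n:ℝ) * ∑ i, b i * σ i - ∑ j, max 0 (|∑ i, F i j * σ i| - 1)) := by
          field_simp
      _ ≤ (1/(n:ℝ)) * ∑ j, z j * g j := this
  linarith
end

section
/- (Label-noise dual, one direction) Fix α ∈ (0,1]. For any g ∈ [−1,1]^n and any σ ≥ 0 in ℝ^p, and any z with −α·1 ≤ z ≤ α·1 and (1/n) F z ≥ b, we have (1/n)⟨z, g⟩ ≥ ⟨b, σ⟩ − (α/n)‖F^⊤σ − g‖_1 ... in particular taking g = g(σ) (the clipped prediction) gives (1/n)⟨z, g(σ)⟩ ≥ ⟨b, σ⟩ − (α/n) Σ_j max(0, |⟨x_j, σ⟩| − 1). -/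
theorem label_noise_weak_duality (n p : ℕ) (hn : 0 < n)
    (F : Fin p → Fin n → ℝ) (hF : ∀ i j, |F i j| ≤ 1)
    (b : Fin p → ℝ) (α : ℝ) (hα0 : 0 < α) (hα1 : α ≤ 1)
    (σ : Fin p → ℝ) (hσ : ∀ i, 0 ≤ σ i)
    (z : Fin n → ℝ) (hz : ∀ j, |z j| ≤ α)
    (hzb : ∀ i, b i ≤ (1 / (n : ℝ)) * ∑ j, F i j * z j) :
    (∀ g : Fin n → ℝ, (∀ j, -1 ≤ g j ∧ g j ≤ 1) →
      (1 / (n : ℝ)) * ∑ j, z j * g j ≥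
        (∑ i, b i * σ i) - (α / (n : ℝ)) * ∑ j, |(∑ i, F i j * σ i) - g j|) ∧
    (∀ g : Fin n → ℝ,
      (∀ j, g j = if |∑ i, F i j * σ i| < 1 then ∑ i, F i j * σ i
          else Real.sign (∑ i, F i j * σ i)) →
      (1 / (n : ℝ)) * ∑ j, z j * g j ≥
        (∑ i, b i * σ i) - (α / (n : ℝ)) * ∑ j, max 0 (|∑ i, F i j * σ i| - 1)) := by
  have hnpos : (0:ℝ) < (n:ℝ) := by exact_mod_cast hn
  have main : ∀ g : Fin n → ℝ,
      (1 / (n : ℝ)) * ∑ j, z j * g j ≥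
        (∑ i, b i * σ i) - (α / (n : ℝ)) * ∑ j, |(∑ i, F i j * σ i) - g j| := by
    intro g
    set t : Fin n → ℝ := fun j => ∑ i, F i j * σ i with ht
    have key1 : (n:ℝ) * ∑ i, b i * σ i ≤ ∑ j, z j * t j := by
      have : ∑ j, z j * t j = ∑ i, σ i * ∑ j, F i j * z j := by
        simp only [ht, Finset.mul_sum, Finset.sum_mul]
        rw [Finset.sum_comm]
        apply Finset.sum_congr rfl; intro j _
        apply Finset.sum_congr rfl; intro i _
        ring
      rw [this, Finset.mul_sum]
      apply Finset.sum_le_sum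
      intro i _
      have h1 : (n:ℝ) * b i ≤ ∑ j, F i j * z j := by
        have := hzb i
        rw [div_mul_eq_mul_div, one_mul, le_div_iff₀ hnpos] at this
        linarith [this]
      calc (n:ℝ) * (b i * σ i) = ((n:ℝ) * b i) * σ i := by ring
        _ ≤ (∑ j, F i j * z j) * σ i := mul_le_mul_of_nonneg_right h1 (hσ i)
        _ = σ i * ∑ j, F i j * z j := by ring
    have key2 : ∑ j, z j * (t j - g j) ≤ α * ∑ j, |t j - g j| := by
      rw [Finset.mul_sum]
      apply Finset.sum_le_sum
      intro j _
      calc z j * (t j - g j) ≤ |z j * (t j - g j)| := le_abs_self _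
        _ = |z j| * |t j - g j| := abs_mul _ _
        _ ≤ α * |t j - g j| := mul_le_mul_of_nonneg_right (hz j) (abs_nonneg _)
    have hsum : ∑ j, z j * g j = ∑ j, z j * t j - ∑ j, z j * (t j - g j) := by
      rw [← Finset.sum_sub_distrib]
      apply Finset.sum_congr rfl; intro j _; ring
    have h1 : (n:ℝ) * ((α/(n:ℝ)) * ∑ j, |t j - g j|) = α * ∑ j, |t j - g j| := by
      field_simp
    have h2 : (n:ℝ) * ((1/(n:ℝ)) * ∑ j, z j * g j) = ∑ j, z j * g j := by
      field_simp
    have hgoal : (n:ℝ) * ((∑ i, b i * σ i) - (α/(n:ℝ)) * ∑ j, |t j - g j|)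
        ≤ (n:ℝ) * ((1/(n:ℝ)) * ∑ j, z j * g j) := by
      rw [mul_sub, h1, h2, hsum]; linarith
    exact (mul_le_mul_iff_right₀ hnpos).mp hgoal
  constructor
  · intro g _; exact main g
  · intro g hg
    have heq : ∀ j, |(∑ i, F i j * σ i) - g j| = max 0 (|∑ i, F i j * σ i| - 1) := by
      intro j
      rw [hg j]
      by_cases h : |∑ i, F i j * σ i| < 1
      · simp [h, max_eq_left (by linarith : |∑ i, F i j * σ i| - 1 ≤ 0)]
      · push_neg at h
        simp only [if_neg (not_lt.mpr h)]
        have hne : (∑ i, F i j * σ i) ≠ 0 := by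
          intro h0; rw [h0] at h; simp at h; linarith
        rcases lt_or_gt_of_ne hne with hlt | hgt
        · rw [Real.sign_of_neg hlt, abs_of_neg hlt] at *
          rw [abs_of_nonpos (by linarith), max_eq_right (by linarith)]
          ring
        · rw [Real.sign_of_pos hgt, abs_of_pos hgt] at *
          rw [abs_of_nonneg (by linarith), max_eq_right (by linarith)]
    have := main g
    simp only [heq] at this
    exact this
end

section
/- (Minimax value via strong duality) Suppose the feasible set Z = {z ∈ [−1,1]^n : (1/n) F z ≥ b} is nonempty. Then max over g ∈ [−1,1]^n of (min over z ∈ Z of (1/n)⟨z, g⟩) equals sup over σ ≥ 0 of −γ(σ), where γ(σ) = (1/n) Σ_j max(0, |⟨x_j, σ⟩| − 1) − ⟨b, σ⟩. -/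
open Finset Filter Topology

lemma sum_swap_FT {n p : ℕ} (F : Fin p → Fin n → ℝ) (σ : Fin p → ℝ) (z : Fin n → ℝ) :
    ∑ i, σ i * ∑ j, F i j * z j = ∑ j, z j * ∑ i, F i j * σ i := by
  simp_rw [Finset.mul_sum]
  rw [Finset.sum_comm]
  exact Finset.sum_congr rfl fun j _ => Finset.sum_congr rfl fun i _ => by ring

lemma max_abs_sub_one_le {t g : ℝ} (hg : -1 ≤ g) (hg' : g ≤ 1) :
    max 0 (|t| - 1) ≤ |t - g| := by
  apply max_le (abs_nonneg _)
  have h1 := abs_sub_abs_le_abs_sub t g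
  have h2 : |g| ≤ 1 := abs_le.mpr ⟨hg, hg'⟩
  linarith

lemma strong_dual_eps (n p : ℕ) (hn : 0 < n) (F : Fin p → Fin n → ℝ)
    (b : Fin p → ℝ) (g : Fin n → ℝ) (hg : ∀ j, -1 ≤ g j ∧ g j ≤ 1)
    (z₀ : Fin n → ℝ) (hz₀ : ∀ j, -1 ≤ z₀ j ∧ z₀ j ≤ 1)
    (hz₀f : ∀ i, b i ≤ (1 / (n:ℝ)) * ∑ j, F i j * z₀ j)
    (ε : ℝ) (hε : 0 < ε) :
    ∃ σ : Fin p → ℝ, (∀ i, 0 ≤ σ i) ∧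
      sInf {w : ℝ | ∃ z : Fin n → ℝ, (∀ j, -1 ≤ z j ∧ z j ≤ 1) ∧
          (∀ i, b i ≤ (1 / (n:ℝ)) * ∑ j, F i j * z j) ∧
          w = (1 / (n:ℝ)) * ∑ j, z j * g j} - ε
        ≤ ∑ i, b i * σ i - (1 / (n:ℝ)) * ∑ j, max 0 (|∑ i, F i j * σ i| - 1) := by
  have hn' : (0:ℝ) < (n:ℝ) := by exact_mod_cast hn
  have hinv : (0:ℝ) < 1 / (n:ℝ) := by positivity
  set W : Set ℝ := {w : ℝ | ∃ z : Fin n → ℝ, (∀ j, -1 ≤ z j ∧ z j ≤ 1) ∧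
          (∀ i, b i ≤ (1 / (n:ℝ)) * ∑ j, F i j * z j) ∧
          w = (1 / (n:ℝ)) * ∑ j, z j * g j} with hW
  have hWlb : ∀ w ∈ W, -((1 / (n:ℝ)) * ∑ j, |g j|) ≤ w := by
    rintro w ⟨z, hz, _, rfl⟩
    have habs : |(1 / (n:ℝ)) * ∑ j, z j * g j| ≤ (1 / (n:ℝ)) * ∑ j, |g j| := by
      rw [abs_mul, abs_of_pos hinv]
      apply mul_le_mul_of_nonneg_left _ (le_of_lt hinv)
      refine le_trans (Finset.abs_sum_le_sum_abs _ _) (Finset.sum_le_sum fun j _ => ?_)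
      rw [abs_mul]
      have hz1 : |z j| ≤ 1 := abs_le.mpr (hz j)
      calc |z j| * |g j| ≤ 1 * |g j| :=
            mul_le_mul_of_nonneg_right hz1 (abs_nonneg _)
        _ = |g j| := one_mul _
    have := neg_abs_le ((1 / (n:ℝ)) * ∑ j, z j * g j)
    linarith
  have hWbdd : BddBelow W := ⟨_, hWlb⟩
  set V : ℝ := sInf W with hV
  set B : Set (Fin n → ℝ) := Set.pi Set.univ (fun _ => Set.Icc (-1:ℝ) 1) with hBdef
  have hBmem : ∀ z : Fin n → ℝ, z ∈ B ↔ ∀ j, -1 ≤ z j ∧ z j ≤ 1 := by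
    intro z
    constructor
    · intro h j
      have := h j (Set.mem_univ j)
      exact ⟨this.1, this.2⟩
    · intro h j _
      exact ⟨(h j).1, (h j).2⟩
  have hBcpt : IsCompact B := isCompact_univ_pi fun _ => isCompact_Icc
  set S : Set ((Fin p → ℝ) × ℝ) := {a | ∃ z : Fin n → ℝ, (∀ j, -1 ≤ z j ∧ z j ≤ 1) ∧
      (∀ i, b i - (1 / (n:ℝ)) * ∑ j, F i j * z j ≤ a.1 i) ∧
      (1 / (n:ℝ)) * ∑ j, z j * g j ≤ a.2} with hSdef
  have hSconv : Convex ℝ S := by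
    rintro a₁ ⟨z₁, hz₁, h₁1, h₁2⟩ a₂ ⟨z₂, hz₂, h₂1, h₂2⟩ s t hs ht hst
    refine ⟨fun j => s * z₁ j + t * z₂ j, fun j => ?_, fun i => ?_, ?_⟩
    · constructor
      · show -1 ≤ s * z₁ j + t * z₂ j
        nlinarith [mul_le_mul_of_nonneg_left (hz₁ j).1 hs,
          mul_le_mul_of_nonneg_left (hz₂ j).1 ht]
      · show s * z₁ j + t * z₂ j ≤ 1
        nlinarith [mul_le_mul_of_nonneg_left (hz₁ j).2 hs,
          mul_le_mul_of_nonneg_left (hz₂ j).2 ht]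
    · have e : ∑ j, F i j * (s * z₁ j + t * z₂ j)
          = s * ∑ j, F i j * z₁ j + t * ∑ j, F i j * z₂ j := by
        rw [Finset.mul_sum, Finset.mul_sum, ← Finset.sum_add_distrib]
        exact Finset.sum_congr rfl fun j _ => by ring
      have hh1 := h₁1 i; have hh2 := h₂1 i
      have hb : s * b i + t * b i = b i := by rw [← add_mul, hst, one_mul]
      simp only [Prod.fst_add, Prod.smul_fst, Pi.add_apply, Pi.smul_apply, smul_eq_mul]
      rw [e]
      nlinarith [mul_le_mul_of_nonneg_left hh1 hs, mul_le_mul_of_nonneg_left hh2 ht]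
    · have e : ∑ j, (s * z₁ j + t * z₂ j) * g j
          = s * ∑ j, z₁ j * g j + t * ∑ j, z₂ j * g j := by
        rw [Finset.mul_sum, Finset.mul_sum, ← Finset.sum_add_distrib]
        exact Finset.sum_congr rfl fun j _ => by ring
      have hb : s * ((1 / (n:ℝ)) * ∑ j, z₁ j * g j) ≤ s * a₁.2 :=
        mul_le_mul_of_nonneg_left h₁2 hs
      have hb' : t * ((1 / (n:ℝ)) * ∑ j, z₂ j * g j) ≤ t * a₂.2 :=
        mul_le_mul_of_nonneg_left h₂2 ht
      simp only [Prod.snd_add, Prod.smul_snd, smul_eq_mul]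
      rw [e]
      nlinarith
  set x : (Fin p → ℝ) × ℝ := (0, V - ε) with hxdef
  have hxnot : x ∉ closure S := by
    intro hx
    rw [mem_closure_iff_seq_limit] at hx
    obtain ⟨a, haS, halim⟩ := hx
    choose z hzbox hz1 hz2 using haS
    have hzB : ∀ k, z k ∈ B := fun k => (hBmem _).mpr (hzbox k)
    obtain ⟨zl, hzlB, φ, hφ, hzl⟩ := hBcpt.tendsto_subseq hzB
    have haφ : Tendsto (a ∘ φ) atTop (𝓝 x) := halim.comp hφ.tendsto_atTop
    have hzlbox : ∀ j, -1 ≤ zl j ∧ zl j ≤ 1 := (hBmem _).mp hzlB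
    have hfeaslim : ∀ i, b i ≤ (1 / (n:ℝ)) * ∑ j, F i j * zl j := by
      intro i
      have hc : Continuous (fun z : Fin n → ℝ => b i - (1 / (n:ℝ)) * ∑ j, F i j * z j) := by
        fun_prop
      have t1 : Tendsto (fun k => b i - (1 / (n:ℝ)) * ∑ j, F i j * z (φ k) j) atTop
          (𝓝 (b i - (1 / (n:ℝ)) * ∑ j, F i j * zl j)) := (hc.tendsto _).comp hzl
      have t2 : Tendsto (fun k => (a (φ k)).1 i) atTop (𝓝 (x.1 i)) :=
        (((continuous_apply i).comp continuous_fst).tendsto _).comp haφ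
      have hle : b i - (1 / (n:ℝ)) * ∑ j, F i j * zl j ≤ x.1 i :=
        le_of_tendsto_of_tendsto' t1 t2 fun k => hz1 (φ k) i
      have hx0 : x.1 i = 0 := rfl
      rw [hx0] at hle
      linarith
    have hvallim : (1 / (n:ℝ)) * ∑ j, zl j * g j ≤ V - ε := by
      have hc : Continuous (fun z : Fin n → ℝ => (1 / (n:ℝ)) * ∑ j, z j * g j) := by
        fun_prop
      have t1 : Tendsto (fun k => (1 / (n:ℝ)) * ∑ j, z (φ k) j * g j) atTop
          (𝓝 ((1 / (n:ℝ)) * ∑ j, zl j * g j)) := (hc.tendsto _).comp hzl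
      have t2 : Tendsto (fun k => (a (φ k)).2) atTop (𝓝 (x.2)) :=
        (continuous_snd.tendsto _).comp haφ
      exact le_of_tendsto_of_tendsto' t1 t2 fun k => hz2 (φ k)
    have hmem : (1 / (n:ℝ)) * ∑ j, zl j * g j ∈ W := ⟨zl, hzlbox, hfeaslim, rfl⟩
    have := csInf_le hWbdd hmem
    rw [← hV] at this
    linarith
  obtain ⟨f, u', hfx, hsep⟩ :=
    geometric_hahn_banach_point_closed (hSconv.closure) isClosed_closure hxnot
  have hsepS : ∀ a ∈ S, u' < f a := fun a ha => hsep a (subset_closure ha)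
  set σ' : Fin p → ℝ := fun i => f ((Pi.single i 1 : Fin p → ℝ), (0:ℝ)) with hσ'def
  set μ : ℝ := f ((0 : Fin p → ℝ), (1:ℝ)) with hμdef
  have hf : ∀ (u : Fin p → ℝ) (t : ℝ), f (u, t) = (∑ i, u i * σ' i) + t * μ := by
    intro u t
    have hsum : (∑ i, u i • (((Pi.single i 1 : Fin p → ℝ), (0:ℝ))))
        = ((u, 0) : (Fin p → ℝ) × ℝ) := by
      rw [Prod.ext_iff]
      constructor
      · rw [Prod.fst_sum]
        simp only [Prod.smul_fst]
        calc ∑ i, u i • (Pi.single i 1 : Fin p → ℝ)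
            = ∑ i, Pi.single i (u i) := Finset.sum_congr rfl fun i _ => by
              rw [← Pi.single_smul]; simp
          _ = u := Finset.univ_sum_single u
      · rw [Prod.snd_sum]
        simp
    have h1 : ((u, t) : (Fin p → ℝ) × ℝ)
        = (∑ i, u i • (((Pi.single i 1 : Fin p → ℝ), (0:ℝ)))) + t • ((0 : Fin p → ℝ), (1:ℝ)) := by
      rw [hsum]
      ext j
      · simp
      · simp
    rw [h1, map_add, map_sum, map_smul]
    simp_rw [map_smul]
    simp only [smul_eq_mul]
    rfl
  set c₀ : ℝ := (1 / (n:ℝ)) * ∑ j, z₀ j * g j with hc₀def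
  clear_value c₀
  have ha₀S : (((0:Fin p → ℝ), c₀) : (Fin p → ℝ) × ℝ) ∈ S := ⟨z₀, hz₀, fun i => by
      have := hz₀f i
      simp only [Pi.zero_apply]
      linarith, hc₀def.symm.le⟩
  have hfa₀ : f ((0:Fin p → ℝ), c₀) = c₀ * μ := by
    rw [hf]
    simp
  have ha₀ : u' < c₀ * μ := by
    have := hsepS _ ha₀S
    rwa [hfa₀] at this
  have hσ'nn : ∀ i, 0 ≤ σ' i := by
    intro i
    by_contra hneg
    push_neg at hneg
    have hσne : σ' i ≠ 0 := ne_of_lt hneg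
    obtain ⟨T, hT, hTσ⟩ : ∃ T : ℝ, 0 < T ∧ T * σ' i = (u' - c₀ * μ) + σ' i := by
      refine ⟨(u' - c₀ * μ) / σ' i + 1, ?_, ?_⟩
      · have h1 : u' - c₀ * μ < 0 := by linarith
        have h2 : 0 < (u' - c₀ * μ) / σ' i := div_pos_of_neg_of_neg h1 hneg
        linarith
      · rw [add_mul, div_mul_cancel₀ _ hσne, one_mul]
    have hmem : (((fun i' => T * (Pi.single i 1 : Fin p → ℝ) i') : Fin p → ℝ), c₀) ∈ S := by
      refine ⟨z₀, hz₀, fun i' => ?_, hc₀def.symm.le⟩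
      have h0 : (0:ℝ) ≤ T * (Pi.single i 1 : Fin p → ℝ) i' := by
        rw [Pi.single_apply]
        split
        · linarith
        · simp
      have := hz₀f i'
      show b i' - (1 / (n:ℝ)) * ∑ j, F i' j * z₀ j ≤ T * (Pi.single i 1 : Fin p → ℝ) i'
      linarith
    have hlt := hsepS _ hmem
    rw [hf] at hlt
    have hsum : ∑ i', (T * (Pi.single i 1 : Fin p → ℝ) i') * σ' i' = T * σ' i := by
      have he : ∀ i' : Fin p, (T * (Pi.single i 1 : Fin p → ℝ) i') * σ' i'
          = if i' = i then T * σ' i else 0 := by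
        intro i'
        rw [Pi.single_apply]
        split
        · rename_i h
          rw [h]
          ring
        · ring
      rw [Finset.sum_congr rfl fun i' _ => he i', Finset.sum_ite_eq' Finset.univ i]
      simp
    rw [hsum] at hlt
    rw [hTσ] at hlt
    linarith
  have hμnn : 0 ≤ μ := by
    by_contra hneg
    push_neg at hneg
    have hμne : μ ≠ 0 := ne_of_lt hneg
    obtain ⟨T, hT, hTμ⟩ : ∃ T : ℝ, 0 < T ∧ (c₀ + T) * μ = c₀ * μ + ((u' - c₀ * μ) + μ) := by
      refine ⟨(u' - c₀ * μ) / μ + 1, ?_, ?_⟩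
      · have h1 : u' - c₀ * μ < 0 := by linarith
        have h2 : 0 < (u' - c₀ * μ) / μ := div_pos_of_neg_of_neg h1 hneg
        linarith
      · rw [add_mul, add_mul, div_mul_cancel₀ _ hμne, one_mul]
    have hmem : (((0 : Fin p → ℝ)), c₀ + T) ∈ S := by
      refine ⟨z₀, hz₀, fun i' => ?_, by linarith⟩
      have := hz₀f i'
      show b i' - (1 / (n:ℝ)) * ∑ j, F i' j * z₀ j ≤ (0 : Fin p → ℝ) i'
      simp only [Pi.zero_apply]
      linarith
    have hlt := hsepS _ hmem
    rw [hf] at hlt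
    have hsum : ∑ i', ((0 : Fin p → ℝ) i') * σ' i' = 0 := by simp
    rw [hsum] at hlt
    rw [hTμ] at hlt
    linarith
  have hfxval : f x = (V - ε) * μ := by
    rw [hxdef, hf]
    simp
  have hmain : ∀ z : Fin n → ℝ, (∀ j, -1 ≤ z j ∧ z j ≤ 1) →
      u' < (∑ i, (b i - (1 / (n:ℝ)) * ∑ j, F i j * z j) * σ' i)
        + ((1 / (n:ℝ)) * ∑ j, z j * g j) * μ := by
    intro z hz
    have hmem : (((fun i => b i - (1 / (n:ℝ)) * ∑ j, F i j * z j) : Fin p → ℝ),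
        (1 / (n:ℝ)) * ∑ j, z j * g j) ∈ S := ⟨z, hz, fun i => le_refl _, le_refl _⟩
    have := hsepS _ hmem
    rwa [hf] at this
  rcases eq_or_lt_of_le hμnn with hμ0 | hμpos
  · exfalso
    have h1 := hmain z₀ hz₀
    rw [← hμ0, mul_zero, add_zero] at h1
    have h2 : (∑ i, (b i - (1 / (n:ℝ)) * ∑ j, F i j * z₀ j) * σ' i) ≤ 0 := by
      apply Finset.sum_nonpos
      intro i _
      have := hz₀f i
      have := hσ'nn i
      nlinarith
    have h3 : f x = 0 := by rw [hfxval, ← hμ0, mul_zero]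
    rw [h3] at hfx
    linarith
  · set σ : Fin p → ℝ := fun i => σ' i / μ with hσdef
    have hσnn : ∀ i, 0 ≤ σ i := fun i => div_nonneg (hσ'nn i) (le_of_lt hμpos)
    refine ⟨σ, hσnn, ?_⟩
    set t : Fin n → ℝ := fun j => ∑ i, F i j * σ i with htdef
    set zs : Fin n → ℝ := fun j => if 0 ≤ g j - t j then (-1:ℝ) else 1 with hzsdef
    have hzsbox : ∀ j, -1 ≤ zs j ∧ zs j ≤ 1 := by
      intro j
      simp only [hzsdef]
      split <;> norm_num
    have h1 := hmain zs hzsbox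
    rw [hfxval] at hfx
    have hσ'eq : ∀ i, σ' i = μ * σ i := by
      intro i
      rw [hσdef]
      field_simp
    have hexp : (∑ i, (b i - (1 / (n:ℝ)) * ∑ j, F i j * zs j) * σ' i)
        + ((1 / (n:ℝ)) * ∑ j, zs j * g j) * μ
        = ((∑ i, (b i - (1 / (n:ℝ)) * ∑ j, F i j * zs j) * σ i)
            + (1 / (n:ℝ)) * ∑ j, zs j * g j) * μ := by
      rw [add_mul, Finset.sum_mul]
      congr 1
      exact Finset.sum_congr rfl fun i _ => by rw [hσ'eq i]; ring
    rw [hexp] at h1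
    have h4 : V - ε < (∑ i, (b i - (1 / (n:ℝ)) * ∑ j, F i j * zs j) * σ i)
        + (1 / (n:ℝ)) * ∑ j, zs j * g j :=
      lt_of_mul_lt_mul_right (lt_trans hfx h1) hμpos.le
    have hswap : ∑ i, ((1 / (n:ℝ)) * ∑ j, F i j * zs j) * σ i
        = (1 / (n:ℝ)) * ∑ j, zs j * t j := by
      calc ∑ i, ((1 / (n:ℝ)) * ∑ j, F i j * zs j) * σ i
          = (1 / (n:ℝ)) * ∑ i, σ i * ∑ j, F i j * zs j := by
            rw [Finset.mul_sum]
            exact Finset.sum_congr rfl fun i _ => by ring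
        _ = (1 / (n:ℝ)) * ∑ j, zs j * ∑ i, F i j * σ i := by rw [sum_swap_FT]
        _ = (1 / (n:ℝ)) * ∑ j, zs j * t j := rfl
    have hzs : ∀ j, |g j - t j| = zs j * t j - zs j * g j := by
      intro j
      simp only [hzsdef]
      split
      · rename_i h
        rw [abs_of_nonneg h]
        ring
      · rename_i h
        push_neg at h
        rw [abs_of_neg h]
        ring
    have h5 : (∑ i, (b i - (1 / (n:ℝ)) * ∑ j, F i j * zs j) * σ i)
        + (1 / (n:ℝ)) * ∑ j, zs j * g j
        = (∑ i, b i * σ i) - (1 / (n:ℝ)) * ∑ j, |g j - t j| := by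
      have e1 : ∑ i, (b i - (1 / (n:ℝ)) * ∑ j, F i j * zs j) * σ i
          = ∑ i, b i * σ i - ∑ i, ((1 / (n:ℝ)) * ∑ j, F i j * zs j) * σ i := by
        rw [← Finset.sum_sub_distrib]
        exact Finset.sum_congr rfl fun i _ => by ring
      rw [e1, hswap]
      have e2 : ∑ j, |g j - t j| = ∑ j, zs j * t j - ∑ j, zs j * g j := by
        rw [← Finset.sum_sub_distrib]
        exact Finset.sum_congr rfl fun j _ => hzs j
      have e3 : (1 / (n:ℝ)) * ∑ j, |g j - t j|
          = (1 / (n:ℝ)) * ∑ j, zs j * t j - (1 / (n:ℝ)) * ∑ j, zs j * g j := by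
        rw [e2, mul_sub]
      linarith [e3]
    rw [h5] at h4
    have h7 : ∑ j, max 0 (|t j| - 1) ≤ ∑ j, |g j - t j| := by
      refine Finset.sum_le_sum fun j _ => ?_
      rw [abs_sub_comm]
      exact max_abs_sub_one_le (hg j).1 (hg j).2
    have h8 : (1 / (n:ℝ)) * ∑ j, max 0 (|t j| - 1) ≤ (1 / (n:ℝ)) * ∑ j, |g j - t j| :=
      mul_le_mul_of_nonneg_left h7 (le_of_lt hinv)
    have hgoal_eq : ∑ j, max 0 (|∑ i, F i j * σ i| - 1) = ∑ j, max 0 (|t j| - 1) := rfl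
    rw [hgoal_eq]
    linarith


open Finset

section helpers2

lemma clamp_spec (t : ℝ) :
    -1 ≤ max (-1) (min 1 t) ∧ max (-1) (min 1 t) ≤ 1 ∧
      |t - max (-1) (min 1 t)| = max 0 (|t| - 1) := by
  rcases le_total t (-1) with h | h
  · have h1 : min 1 t = t := min_eq_right (by linarith)
    have h2 : max (-1) t = -1 := max_eq_left (by linarith)
    rw [h1, h2]
    refine ⟨le_refl _, by norm_num, ?_⟩
    rw [abs_of_nonpos (by linarith), abs_of_nonpos (by linarith),
      max_eq_right (by linarith)]
    ring
  · rcases le_total t 1 with h' | h'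
    · have h1 : min 1 t = t := min_eq_right h'
      have h2 : max (-1) t = t := max_eq_right h
      rw [h1, h2]
      refine ⟨h, h', ?_⟩
      rw [sub_self, abs_zero, max_eq_left (by cases abs_cases t <;> linarith)]
    · have h1 : min 1 t = 1 := min_eq_left h'
      rw [h1]
      have h2 : max (-1) (1:ℝ) = 1 := by norm_num
      rw [h2]
      refine ⟨by norm_num, le_refl _, ?_⟩
      rw [abs_of_nonneg (by linarith), abs_of_nonneg (by linarith),
        max_eq_right (by linarith)]

lemma swap_helper {n p : ℕ} (F : Fin p → Fin n → ℝ) (σ : Fin p → ℝ) (z : Fin n → ℝ) :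
    ∑ i, ((1 / (n:ℝ)) * ∑ j, F i j * z j) * σ i
      = (1 / (n:ℝ)) * ∑ j, z j * ∑ i, F i j * σ i := by
  have hs : ∑ i, σ i * ∑ j, F i j * z j = ∑ j, z j * ∑ i, F i j * σ i := by
    simp_rw [Finset.mul_sum]
    rw [Finset.sum_comm]
    exact Finset.sum_congr rfl fun j _ => Finset.sum_congr rfl fun i _ => by ring
  calc ∑ i, ((1 / (n:ℝ)) * ∑ j, F i j * z j) * σ i
      = (1 / (n:ℝ)) * ∑ i, σ i * ∑ j, F i j * z j := by
        rw [Finset.mul_sum]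
        exact Finset.sum_congr rfl fun i _ => by ring
    _ = (1 / (n:ℝ)) * ∑ j, z j * ∑ i, F i j * σ i := by rw [hs]

lemma abs_box_sum {n : ℕ} (hn : 0 < n) (z g : Fin n → ℝ)
    (hz : ∀ j, -1 ≤ z j ∧ z j ≤ 1) (hg : ∀ j, -1 ≤ g j ∧ g j ≤ 1) :
    |(1 / (n:ℝ)) * ∑ j, z j * g j| ≤ 1 := by
  have hn' : (0:ℝ) < (n:ℝ) := by exact_mod_cast hn
  have hinv : (0:ℝ) < 1 / (n:ℝ) := by positivity
  rw [abs_mul, abs_of_pos hinv]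
  have h1 : |∑ j, z j * g j| ≤ (n:ℝ) := by
    refine le_trans (Finset.abs_sum_le_sum_abs _ _) ?_
    have : ∀ j : Fin n, |z j * g j| ≤ 1 := by
      intro j
      rw [abs_mul]
      have hz1 : |z j| ≤ 1 := abs_le.mpr (hz j)
      have hg1 : |g j| ≤ 1 := abs_le.mpr (hg j)
      calc |z j| * |g j| ≤ 1 * 1 :=
            mul_le_mul hz1 hg1 (abs_nonneg _) (by norm_num)
        _ = 1 := by norm_num
    calc ∑ j, |z j * g j| ≤ ∑ _j : Fin n, (1:ℝ) := Finset.sum_le_sum fun j _ => this j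
      _ = (n:ℝ) := by simp
  calc 1 / (n:ℝ) * |∑ j, z j * g j| ≤ 1 / (n:ℝ) * (n:ℝ) :=
        mul_le_mul_of_nonneg_left h1 (le_of_lt hinv)
    _ = 1 := by field_simp

end helpers2


theorem minimax_value_eq_neg_slack (n p : ℕ) (hn : 0 < n)
    (F : Fin p → Fin n → ℝ) (hF : ∀ i j, |F i j| ≤ 1)
    (b : Fin p → ℝ)
    (hfeas : ∃ z : Fin n → ℝ, (∀ j, -1 ≤ z j ∧ z j ≤ 1) ∧
      ∀ i, b i ≤ (1 / (n : ℝ)) * ∑ j, F i j * z j) :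
    sSup {v : ℝ | ∃ g : Fin n → ℝ, (∀ j, -1 ≤ g j ∧ g j ≤ 1) ∧
        v = sInf {w : ℝ | ∃ z : Fin n → ℝ, (∀ j, -1 ≤ z j ∧ z j ≤ 1) ∧
          (∀ i, b i ≤ (1 / (n : ℝ)) * ∑ j, F i j * z j) ∧
          w = (1 / (n : ℝ)) * ∑ j, z j * g j}}
    = sSup {v : ℝ | ∃ σ : Fin p → ℝ, (∀ i, 0 ≤ σ i) ∧
        v = -((1 / (n : ℝ)) * ∑ j, max 0 (|∑ i, F i j * σ i| - 1)
              - ∑ i, b i * σ i)} := by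
  obtain ⟨z₀, hz₀, hz₀f⟩ := hfeas
  have hn' : (0:ℝ) < (n:ℝ) := by exact_mod_cast hn
  have hinv : (0:ℝ) < 1 / (n:ℝ) := by positivity
  have hmul1 : (1 / (n:ℝ)) * (n:ℝ) = 1 := by field_simp
  set P : Set ℝ := {v : ℝ | ∃ g : Fin n → ℝ, (∀ j, -1 ≤ g j ∧ g j ≤ 1) ∧
        v = sInf {w : ℝ | ∃ z : Fin n → ℝ, (∀ j, -1 ≤ z j ∧ z j ≤ 1) ∧
          (∀ i, b i ≤ (1 / (n : ℝ)) * ∑ j, F i j * z j) ∧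
          w = (1 / (n : ℝ)) * ∑ j, z j * g j}} with hPdef
  set D : Set ℝ := {v : ℝ | ∃ σ : Fin p → ℝ, (∀ i, 0 ≤ σ i) ∧
        v = -((1 / (n : ℝ)) * ∑ j, max 0 (|∑ i, F i j * σ i| - 1)
              - ∑ i, b i * σ i)} with hDdef
  -- inner feasible sets
  have hWmem : ∀ g : Fin n → ℝ, (1 / (n:ℝ)) * ∑ j, z₀ j * g j ∈
      {w : ℝ | ∃ z : Fin n → ℝ, (∀ j, -1 ≤ z j ∧ z j ≤ 1) ∧
          (∀ i, b i ≤ (1 / (n : ℝ)) * ∑ j, F i j * z j) ∧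
          w = (1 / (n : ℝ)) * ∑ j, z j * g j} := fun g => ⟨z₀, hz₀, hz₀f, rfl⟩
  have hWbdd : ∀ g : Fin n → ℝ, (∀ j, -1 ≤ g j ∧ g j ≤ 1) →
      BddBelow {w : ℝ | ∃ z : Fin n → ℝ, (∀ j, -1 ≤ z j ∧ z j ≤ 1) ∧
          (∀ i, b i ≤ (1 / (n : ℝ)) * ∑ j, F i j * z j) ∧
          w = (1 / (n : ℝ)) * ∑ j, z j * g j} := by
    intro g hg
    refine ⟨-1, ?_⟩
    rintro w ⟨z, hz, _, rfl⟩
    have := abs_box_sum hn z g hz hg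
    have := neg_abs_le ((1 / (n:ℝ)) * ∑ j, z j * g j)
    linarith
  -- nonemptiness
  have hPne : P.Nonempty := by
    refine ⟨_, (fun _ => (0:ℝ)), fun j => by norm_num, rfl⟩
  have hDne : D.Nonempty := by
    refine ⟨_, (fun _ => (0:ℝ)), fun i => le_refl 0, rfl⟩
  -- bounded above
  have hPbdd : BddAbove P := by
    refine ⟨1, ?_⟩
    rintro v ⟨g, hg, rfl⟩
    have h1 := csInf_le (hWbdd g hg) (hWmem g)
    have h2 := abs_box_sum hn z₀ g hz₀ hg
    have := le_abs_self ((1 / (n:ℝ)) * ∑ j, z₀ j * g j)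
    linarith
  have hDbdd : BddAbove D := by
    refine ⟨1, ?_⟩
    rintro v ⟨σ, hσ, rfl⟩
    have h1 : ∑ i, b i * σ i ≤ (1 / (n:ℝ)) * ∑ j, z₀ j * ∑ i, F i j * σ i := by
      rw [← swap_helper]
      exact Finset.sum_le_sum fun i _ => mul_le_mul_of_nonneg_right (hz₀f i) (hσ i)
    have h2 : ∑ j, z₀ j * ∑ i, F i j * σ i ≤ ∑ j, |∑ i, F i j * σ i| := by
      refine Finset.sum_le_sum fun j _ => ?_
      have ha := le_abs_self (z₀ j * ∑ i, F i j * σ i)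
      have : |z₀ j * ∑ i, F i j * σ i| ≤ |∑ i, F i j * σ i| := by
        rw [abs_mul]
        have hz1 : |z₀ j| ≤ 1 := abs_le.mpr (hz₀ j)
        calc |z₀ j| * |∑ i, F i j * σ i| ≤ 1 * |∑ i, F i j * σ i| :=
              mul_le_mul_of_nonneg_right hz1 (abs_nonneg _)
          _ = _ := one_mul _
      linarith
    have h3 : ∑ j, (|∑ i, F i j * σ i| - 1) ≤ ∑ j, max 0 (|∑ i, F i j * σ i| - 1) :=
      Finset.sum_le_sum fun j _ => le_max_right _ _
    have h4 : ∑ j, (|∑ i, F i j * σ i| - 1) = (∑ j, |∑ i, F i j * σ i|) - (n:ℝ) := by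
      rw [Finset.sum_sub_distrib]
      simp
    have h5 : (1 / (n:ℝ)) * ∑ j, z₀ j * ∑ i, F i j * σ i
        ≤ (1 / (n:ℝ)) * ∑ j, |∑ i, F i j * σ i| :=
      mul_le_mul_of_nonneg_left h2 (le_of_lt hinv)
    have h6 : (1 / (n:ℝ)) * ((∑ j, |∑ i, F i j * σ i|) - (n:ℝ))
        ≤ (1 / (n:ℝ)) * ∑ j, max 0 (|∑ i, F i j * σ i| - 1) := by
      rw [← h4]
      exact mul_le_mul_of_nonneg_left h3 (le_of_lt hinv)
    rw [mul_sub, hmul1] at h6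
    linarith
  apply le_antisymm
  · -- sSup P ≤ sSup D, via strong duality
    apply csSup_le hPne
    rintro v ⟨g, hg, rfl⟩
    apply le_of_forall_pos_le_add
    intro ε hε
    obtain ⟨σ, hσ, hle⟩ := strong_dual_eps n p hn F b g hg z₀ hz₀ hz₀f ε hε
    have hmem : -((1 / (n:ℝ)) * ∑ j, max 0 (|∑ i, F i j * σ i| - 1)
        - ∑ i, b i * σ i) ∈ D := ⟨σ, hσ, rfl⟩
    have := le_csSup hDbdd hmem
    linarith
  · -- sSup D ≤ sSup P, via clamping
    apply csSup_le hDne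
    rintro v ⟨σ, hσ, rfl⟩
    set g : Fin n → ℝ := fun j => max (-1) (min 1 (∑ i, F i j * σ i)) with hgdef
    have hg : ∀ j, -1 ≤ g j ∧ g j ≤ 1 := fun j =>
      ⟨(clamp_spec _).1, (clamp_spec _).2.1⟩
    have hclamp : ∀ j, |(∑ i, F i j * σ i) - g j| = max 0 (|∑ i, F i j * σ i| - 1) :=
      fun j => (clamp_spec _).2.2
    have hkey : -((1 / (n:ℝ)) * ∑ j, max 0 (|∑ i, F i j * σ i| - 1)
        - ∑ i, b i * σ i) ≤ sInf {w : ℝ | ∃ z : Fin n → ℝ, (∀ j, -1 ≤ z j ∧ z j ≤ 1) ∧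
          (∀ i, b i ≤ (1 / (n : ℝ)) * ∑ j, F i j * z j) ∧
          w = (1 / (n : ℝ)) * ∑ j, z j * g j} := by
      apply le_csInf ⟨_, hWmem g⟩
      rintro w ⟨z, hz, hzf, rfl⟩
      have h1 : ∑ i, b i * σ i ≤ (1 / (n:ℝ)) * ∑ j, z j * ∑ i, F i j * σ i := by
        rw [← swap_helper]
        exact Finset.sum_le_sum fun i _ => mul_le_mul_of_nonneg_right (hzf i) (hσ i)
      have h2 : ∑ j, (z j * ∑ i, F i j * σ i - z j * g j)
          ≤ ∑ j, max 0 (|∑ i, F i j * σ i| - 1) := by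
        refine Finset.sum_le_sum fun j _ => ?_
        rw [← hclamp j]
        have ha := le_abs_self (z j * ((∑ i, F i j * σ i) - g j))
        have hb : |z j * ((∑ i, F i j * σ i) - g j)| ≤ |(∑ i, F i j * σ i) - g j| := by
          rw [abs_mul]
          have hz1 : |z j| ≤ 1 := abs_le.mpr (hz j)
          calc |z j| * |(∑ i, F i j * σ i) - g j|
              ≤ 1 * |(∑ i, F i j * σ i) - g j| :=
                mul_le_mul_of_nonneg_right hz1 (abs_nonneg _)
            _ = _ := one_mul _
        have hc : z j * ((∑ i, F i j * σ i) - g j)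
            = z j * ∑ i, F i j * σ i - z j * g j := by ring
        linarith [hc ▸ le_trans ha hb]
      have h3 : ∑ j, (z j * ∑ i, F i j * σ i - z j * g j)
          = (∑ j, z j * ∑ i, F i j * σ i) - ∑ j, z j * g j :=
        Finset.sum_sub_distrib _ _
      rw [h3] at h2
      have h4 : (1 / (n:ℝ)) * ((∑ j, z j * ∑ i, F i j * σ i) - ∑ j, z j * g j)
          ≤ (1 / (n:ℝ)) * ∑ j, max 0 (|∑ i, F i j * σ i| - 1) :=
        mul_le_mul_of_nonneg_left h2 (le_of_lt hinv)
      rw [mul_sub] at h4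
      linarith
    have hmemP : sInf {w : ℝ | ∃ z : Fin n → ℝ, (∀ j, -1 ≤ z j ∧ z j ≤ 1) ∧
          (∀ i, b i ≤ (1 / (n : ℝ)) * ∑ j, F i j * z j) ∧
          w = (1 / (n : ℝ)) * ∑ j, z j * g j} ∈ P := ⟨g, hg, rfl⟩
    exact le_trans hkey (le_csSup hPbdd hmemP)
end
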